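/- Let C be a connected subgraph of G with vertex set V_C and edge set E_C such that V_C contains at least one boundary vertex. Then for every set of defects S ⊆ V_bulk there exists a set D ⊆ E_C with σ(D) = S ∩ V_C. -/

import Mathlib

open scoped symmDiff

lemma odd_ncard_symmDiff {α : Type*} {A B : Set α} (hA : A.Finite) (hB : B.Finite) :
    Odd (A ∆ B).ncard ↔ ¬ (Odd A.ncard ↔ Odd B.ncard) := by
  have h1 : A ∆ B = (A \ B) ∪ (B \ A) := by
    ext x; simp [Set.mem_symmDiff]
  have hAB : A = (A \ B) ∪ (A ∩ B) := by
    ext x; by_cases hx : x ∈ B <;> simp [hx]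
  have hBA : B = (B \ A) ∪ (A ∩ B) := by
    ext x; by_cases hx : x ∈ A <;> simp [hx]
  have d1 : Disjoint (A \ B) (B \ A) := by
    rw [Set.disjoint_left]; intro x hx hx2; exact hx2.2 hx.1
  have d2 : Disjoint (A \ B) (A ∩ B) := by
    rw [Set.disjoint_left]; intro x hx hx2; exact hx.2 hx2.2
  have d3 : Disjoint (B \ A) (A ∩ B) := by
    rw [Set.disjoint_left]; intro x hx hx2; exact hx.2 hx2.1
  have e1 : A.ncard = (A \ B).ncard + (A ∩ B).ncard := by
    conv_lhs => rw [hAB]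
    rw [Set.ncard_union_eq d2 hA.diff (hA.inter_of_left _)]
  have e2 : B.ncard = (B \ A).ncard + (A ∩ B).ncard := by
    conv_lhs => rw [hBA]
    rw [Set.ncard_union_eq d3 hB.diff (hA.inter_of_left _)]
  rw [h1, Set.ncard_union_eq d1 hA.diff hB.diff, e1, e2]
  simp only [Nat.odd_iff]
  omega

/-- The syndrome of a set `F` of edges: the set of bulk vertices incident to an
odd number of edges of `F`. -/
def syndrome {V : Type*} (Vbulk : Set V) (F : Set (Sym2 V)) : Set V :=
  {v ∈ Vbulk | Odd {e ∈ F | v ∈ e}.ncard}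

lemma syndrome_empty {V : Type*} (Vbulk : Set V) : syndrome Vbulk (∅ : Set (Sym2 V)) = ∅ := by
  ext v
  simp [syndrome, Nat.odd_iff]

lemma syndrome_symmDiff {V : Type*} [Fintype V] (Vbulk : Set V) (D₁ D₂ : Set (Sym2 V)) :
    syndrome Vbulk (D₁ ∆ D₂) = syndrome Vbulk D₁ ∆ syndrome Vbulk D₂ := by
  classical
  ext v
  have hsep : {e ∈ D₁ ∆ D₂ | v ∈ e} = {e ∈ D₁ | v ∈ e} ∆ {e ∈ D₂ | v ∈ e} := by
    ext e; simp [Set.mem_symmDiff]; tauto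
  have h := odd_ncard_symmDiff (A := {e ∈ D₁ | v ∈ e}) (B := {e ∈ D₂ | v ∈ e})
    (Set.toFinite _) (Set.toFinite _)
  rw [← hsep] at h
  simp only [syndrome, Set.mem_symmDiff, Set.mem_setOf_eq, h]
  tauto

lemma syndrome_single {V : Type*} [Fintype V] (Vbulk : Set V) {a b : V} (hab : a ≠ b) :
    syndrome Vbulk {s(a, b)} = ({a} ∆ {b}) ∩ Vbulk := by
  classical
  have hs : ({a} ∆ ({b} : Set V)) = {a, b} := by
    ext x
    simp only [Set.mem_symmDiff, Set.mem_singleton_iff, Set.mem_insert_iff]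
    constructor
    · tauto
    · rintro (rfl | rfl)
      · exact Or.inl ⟨rfl, hab⟩
      · exact Or.inr ⟨rfl, fun h => hab h.symm⟩
  ext v
  have hodd : Odd {e ∈ ({s(a,b)} : Set (Sym2 V)) | v ∈ e}.ncard ↔ v ∈ s(a, b) := by
    by_cases hv : v ∈ s(a, b)
    · have h1 : {e ∈ ({s(a,b)} : Set (Sym2 V)) | v ∈ e} = {s(a,b)} := by
        ext e
        simp only [Set.mem_setOf_eq, Set.mem_singleton_iff, and_iff_left_iff_imp]
        rintro rfl; exact hv
      rw [h1]
      simp [Set.ncard_singleton, hv]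
    · have h1 : {e ∈ ({s(a,b)} : Set (Sym2 V)) | v ∈ e} = ∅ := by
        ext e
        simp only [Set.mem_setOf_eq, Set.mem_singleton_iff, Set.mem_empty_iff_false, iff_false,
          not_and]
        rintro rfl; exact hv
      rw [h1]
      simp [hv, Nat.odd_iff]
  rw [hs]
  simp only [syndrome, Set.mem_setOf_eq]
  rw [hodd]
  simp only [Sym2.mem_iff, Set.mem_inter_iff, Set.mem_insert_iff, Set.mem_singleton_iff]
  tauto

lemma syndrome_walk {V : Type*} [Fintype V] {G : SimpleGraph V} (Vbulk : Set V)
    (C : G.Subgraph) {u x : C.verts} (w : C.coe.Walk u x) :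
    ∃ D ⊆ C.edgeSet, syndrome Vbulk D = (({u.1} : Set V) ∆ {x.1}) ∩ Vbulk := by
  induction w with
  | nil =>
    refine ⟨∅, Set.empty_subset _, ?_⟩
    rw [syndrome_empty]
    simp
  | @cons p q r h w ih =>
    obtain ⟨D, hD, hsyn⟩ := ih
    have hadj : C.Adj p.1 q.1 := h
    have hne : p.1 ≠ q.1 := hadj.ne
    refine ⟨D ∆ {s(p.1, q.1)}, ?_, ?_⟩
    · intro e he
      rcases he with ⟨he, -⟩ | ⟨he, -⟩
      · exact hD he
      · rw [Set.mem_singleton_iff] at he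
        subst he
        exact hadj
    · rw [syndrome_symmDiff, hsyn, syndrome_single Vbulk hne]
      ext v
      simp only [Set.mem_symmDiff, Set.mem_inter_iff, Set.mem_singleton_iff]
      by_cases hv : v ∈ Vbulk
      · simp only [hv, and_true]; tauto
      · simp [hv]

/-- A connected cluster touching a boundary admits an internal correction for
every set of defects. -/
theorem correction_of_boundary {V : Type*} [Fintype V]
    (G : SimpleGraph V) (Vbulk Vboundary : Set V)
    (hdisj : Disjoint Vbulk Vboundary) (hcover : Vbulk ∪ Vboundary = Set.univ)
    (C : G.Subgraph) (hconn : C.Connected)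
    (hbd : (C.verts ∩ Vboundary).Nonempty) :
    ∀ S ⊆ Vbulk, ∃ D ⊆ C.edgeSet, syndrome Vbulk D = S ∩ C.verts := by
  classical
  obtain ⟨b, hbC, hbB⟩ := hbd
  have hbnb : b ∉ Vbulk := fun h => (Set.disjoint_left.mp hdisj h) hbB
  -- Step 1: every bulk vertex of C is the syndrome of some internal edge set.
  have hsingle : ∀ v ∈ Vbulk, v ∈ C.verts →
      ∃ D ⊆ C.edgeSet, syndrome Vbulk D = {v} := by
    intro v hvB hvC
    obtain ⟨w⟩ := hconn ⟨v, hvC⟩ ⟨b, hbC⟩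
    obtain ⟨D, hD, hsyn⟩ := syndrome_walk Vbulk C w
    refine ⟨D, hD, ?_⟩
    rw [hsyn]
    ext x
    simp only [Set.mem_symmDiff, Set.mem_inter_iff, Set.mem_singleton_iff]
    constructor
    · rintro ⟨(⟨rfl, -⟩ | ⟨rfl, -⟩), hx⟩
      · rfl
      · exact absurd hx hbnb
    · rintro rfl
      exact ⟨Or.inl ⟨rfl, fun h => hbnb (h ▸ hvB)⟩, hvB⟩
  -- Step 2: induction over finite defect sets inside C.
  have key : ∀ T : Set V, T ⊆ Vbulk → T ⊆ C.verts →
      ∃ D ⊆ C.edgeSet, syndrome Vbulk D = T := by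
    intro T
    refine Set.Finite.induction_on (motive := fun T _ => T ⊆ Vbulk → T ⊆ C.verts →
        ∃ D ⊆ C.edgeSet, syndrome Vbulk D = T) T (Set.toFinite T) ?_ ?_
    · intro _ _
      exact ⟨∅, Set.empty_subset _, syndrome_empty Vbulk⟩
    · intro v T hvT hTfin ih hB hC
      obtain ⟨D, hD, hsyn⟩ := ih (fun x hx => hB (Set.mem_insert_of_mem _ hx))
        (fun x hx => hC (Set.mem_insert_of_mem _ hx))
      obtain ⟨Dv, hDv, hsynv⟩ := hsingle v (hB (Set.mem_insert _ _))
        (hC (Set.mem_insert _ _))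
      refine ⟨D ∆ Dv, ?_, ?_⟩
      · intro e he
        rcases he with ⟨he, -⟩ | ⟨he, -⟩
        · exact hD he
        · exact hDv he
      · rw [syndrome_symmDiff, hsyn, hsynv]
        ext x
        simp only [Set.mem_symmDiff, Set.mem_singleton_iff, Set.mem_insert_iff]
        constructor
        · rintro (⟨hx, hne⟩ | ⟨rfl, -⟩)
          · exact Or.inr hx
          · exact Or.inl rfl
        · rintro (rfl | hx)
          · exact Or.inr ⟨rfl, hvT⟩
          · exact Or.inl ⟨hx, fun h => hvT (h ▸ hx)⟩
  intro S hS
  exact key (S ∩ C.verts) (fun x hx => hS hx.1) (fun x hx => hx.2)
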